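/- A function h : ℝ → ℝ is a 2π-periodic C³ function with h(θ) > 0 for all θ satisfying h(θ)³·(h'(θ) + h'''(θ)) = 0 for all θ if and only if there exist constants c₁ > 0, c₂ ∈ ℝ and θ₀ ∈ ℝ with |c₂| < c₁ such that h(θ) = c₁ + c₂·sin(θ − θ₀) for all θ ∈ ℝ. -/

import Mathlib

open Real

/-- Energy argument: if u'' = -u, u 0 = 0, u' 0 = 0 then u ≡ 0. -/
lemma osc_zero_aux (u : ℝ → ℝ) (hu : Differentiable ℝ u) (hu' : Differentiable ℝ (deriv u))
    (hode : ∀ x, deriv (deriv u) x = -u x) (h0 : u 0 = 0) (h1 : deriv u 0 = 0) :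
    ∀ x, u x = 0 := by
  set E : ℝ → ℝ := fun x => u x ^ 2 + deriv u x ^ 2 with hE
  have hd : ∀ x, HasDerivAt E 0 x := by
    intro x
    have d1 : HasDerivAt (fun x => u x ^ 2) (2 * u x ^ 1 * deriv u x) x :=
      ((hu x).hasDerivAt).pow 2
    have d2 : HasDerivAt (fun x => deriv u x ^ 2) (2 * deriv u x ^ 1 * deriv (deriv u) x) x :=
      ((hu' x).hasDerivAt).pow 2
    exact (d1.add d2).congr_deriv (by rw [hode x]; ring)
  have hconst : ∀ x, E x = E 0 :=
    fun x => is_const_of_deriv_eq_zero (fun y => (hd y).differentiableAt)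
      (fun y => (hd y).deriv) x 0
  intro x
  have := hconst x
  have hE0 : E 0 = 0 := by simp [hE, h0, h1]
  have : u x ^ 2 + deriv u x ^ 2 = 0 := by rw [← hE0]; exact this
  nlinarith [sq_nonneg (u x), sq_nonneg (deriv u x)]

/-- Solutions of h' + h''' = 0 (for C³ h) have the form c₁ + A cos + B sin. -/
lemma ode_form_aux (h : ℝ → ℝ) (hC : ContDiff ℝ 3 h)
    (hode : ∀ θ, deriv h θ + deriv (deriv (deriv h)) θ = 0) :
    ∃ c₁ A B : ℝ, ∀ θ, h θ = c₁ + A * Real.cos θ + B * Real.sin θ := by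
  have hCd : ContDiff ℝ 2 (deriv h) :=
    (contDiff_succ_iff_deriv.mp (show ContDiff ℝ (2+1) h from hC)).2.2
  have hCdd : ContDiff ℝ 1 (deriv (deriv h)) :=
    (contDiff_succ_iff_deriv.mp (show ContDiff ℝ (1+1) (deriv h) from hCd)).2.2
  have hdh : Differentiable ℝ h := hC.differentiable (by norm_num)
  have hdd : Differentiable ℝ (deriv h) := hCd.differentiable (by norm_num)
  have hddd : Differentiable ℝ (deriv (deriv h)) := hCdd.differentiable (by norm_num)
  set g : ℝ → ℝ := fun θ => h θ + deriv (deriv h) θ with hg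
  have hgd : ∀ x, HasDerivAt g (deriv h x + deriv (deriv (deriv h)) x) x :=
    fun x => ((hdh x).hasDerivAt).add ((hddd x).hasDerivAt)
  have hgc : ∀ x, g x = g 0 := by
    intro x
    refine is_const_of_deriv_eq_zero (fun y => (hgd y).differentiableAt) (fun y => ?_) x 0
    rw [(hgd y).deriv]; exact hode y
  set c₁ := g 0 with hc₁
  have hpp : ∀ θ, deriv (deriv h) θ = c₁ - h θ := fun θ => by
    have := hgc θ; simp only [hg] at this; linarith
  set A := h 0 - c₁ with hA
  set B := deriv h 0 with hB
  set u : ℝ → ℝ := fun θ => h θ - c₁ - A * Real.cos θ - B * Real.sin θ with hu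
  have hud : ∀ x, HasDerivAt u (deriv h x + A * Real.sin x - B * Real.cos x) x := by
    intro x
    have := (((hdh x).hasDerivAt).sub_const c₁).sub
        (((Real.hasDerivAt_cos x).const_mul A))
    have := this.sub (((Real.hasDerivAt_sin x).const_mul B))
    exact this.congr_deriv (by ring)
  have hDu : deriv u = fun x => deriv h x + A * Real.sin x - B * Real.cos x :=
    funext fun x => (hud x).deriv
  have hudd : ∀ x, HasDerivAt (deriv u) (-u x) x := by
    intro x
    rw [hDu]
    have := (((hdd x).hasDerivAt).add ((Real.hasDerivAt_sin x).const_mul A)).sub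
      ((Real.hasDerivAt_cos x).const_mul B)
    exact this.congr_deriv (by rw [hpp x]; simp [hu]; ring)
  have hz : ∀ x, u x = 0 := by
    apply osc_zero_aux u (fun x => (hud x).differentiableAt) (fun x => (hudd x).differentiableAt)
    · intro x; rw [(hudd x).deriv]
    · simp [hu, hA]
    · rw [hDu]; simp [hB]
  refine ⟨c₁, A, B, fun θ => ?_⟩
  have := hz θ
  simp only [hu] at this
  linarith

/-- Writing A cos θ + B sin θ in phase-amplitude form c₂ sin (θ - θ₀) with c₂ ≥ 0. -/
lemma amp_phase_aux (A B : ℝ) :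
    ∃ c₂ θ₀ : ℝ, 0 ≤ c₂ ∧ c₂ ≤ |A| + |B| ∧
      ∀ θ : ℝ, A * Real.cos θ + B * Real.sin θ = c₂ * Real.sin (θ - θ₀) := by
  by_cases hz : A = 0 ∧ B = 0
  · exact ⟨0, 0, le_rfl, by simp [hz.1, hz.2], fun θ => by simp [hz.1, hz.2]⟩
  · set z : ℂ := ⟨B, -A⟩ with hzdef
    have hzne : z ≠ 0 := by
      intro hc
      apply hz
      have h1 : z.re = 0 := by rw [hc]; simp
      have h2 : z.im = 0 := by rw [hc]; simp
      simp [hzdef] at h1 h2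
      exact ⟨h2, h1⟩
    set c₂ := ‖z‖ with hc₂
    set θ₀ := Complex.arg z with hθ₀
    have habs : 0 < c₂ := by
      rw [hc₂]; exact (norm_pos_iff.mpr hzne)
    have hcos : Real.cos θ₀ = B / c₂ := by
      rw [hθ₀, Complex.cos_arg hzne]
    have hsin : Real.sin θ₀ = -A / c₂ := by
      rw [hθ₀, Complex.sin_arg]
    refine ⟨c₂, θ₀, le_of_lt habs, ?_, fun θ => ?_⟩
    · have : c₂ ≤ |z.re| + |z.im| := Complex.norm_le_abs_re_add_abs_im z
      simpa [hzdef, abs_neg, add_comm] using this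
    · rw [Real.sin_sub, hcos, hsin]
      field_simp
      ring

/-- Classification of positive 2π-periodic C³ solutions of h³(h' + h''') = 0:
    they are exactly the functions c₁ + c₂ sin(θ − θ₀) with |c₂| < c₁. -/
theorem stmt_5 (h : ℝ → ℝ) :
    (Function.Periodic h (2 * π) ∧ ContDiff ℝ 3 h ∧ (∀ θ, 0 < h θ) ∧
      (∀ θ, (h θ) ^ 3 * (deriv h θ + iteratedDeriv 3 h θ) = 0))
    ↔ ∃ c₁ c₂ θ₀ : ℝ, 0 < c₁ ∧ |c₂| < c₁ ∧
        ∀ θ : ℝ, h θ = c₁ + c₂ * Real.sin (θ - θ₀) := by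
  have hiter : iteratedDeriv 3 h = deriv (deriv (deriv h)) := by
    rw [show (3:ℕ) = 2+1 from rfl, iteratedDeriv_succ, show (2:ℕ)=1+1 from rfl,
      iteratedDeriv_succ, iteratedDeriv_one]
  constructor
  · rintro ⟨hper, hC, hpos, heq⟩
    have hode : ∀ θ, deriv h θ + deriv (deriv (deriv h)) θ = 0 := by
      intro θ
      have := heq θ
      rw [hiter] at this
      have h3 : (h θ)^3 ≠ 0 := pow_ne_zero 3 (ne_of_gt (hpos θ))
      exact (mul_eq_zero.mp this).resolve_left h3
    obtain ⟨c₁, A, B, hform⟩ := ode_form_aux h hC hode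
    obtain ⟨c₂, θ₀, hc₂0, _, hphase⟩ := amp_phase_aux A B
    have hform' : ∀ θ, h θ = c₁ + c₂ * Real.sin (θ - θ₀) := by
      intro θ
      rw [hform θ, add_assoc, hphase θ]
    refine ⟨c₁, c₂, θ₀, ?_, ?_, hform'⟩
    · have := hpos θ₀
      rw [hform' θ₀] at this
      simpa using this
    · have h1 := hpos (θ₀ - π/2)
      rw [hform' (θ₀ - π/2)] at h1
      have : θ₀ - π/2 - θ₀ = -(π/2) := by ring
      rw [this, Real.sin_neg, Real.sin_pi_div_two] at h1
      rw [abs_of_nonneg hc₂0]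
      linarith
  · rintro ⟨c₁, c₂, θ₀, hc₁, hc₂, hform⟩
    have hfun : h = fun θ => c₁ + c₂ * Real.sin (θ - θ₀) := funext hform
    subst hfun
    have hd1 : ∀ x : ℝ, HasDerivAt (fun θ => c₁ + c₂ * Real.sin (θ - θ₀))
        (c₂ * Real.cos (x - θ₀)) x := by
      intro x
      have : HasDerivAt (fun θ : ℝ => Real.sin (θ - θ₀)) (Real.cos (x - θ₀) * 1) x :=
        ((hasDerivAt_id' x).sub_const θ₀).sin
      simpa using (this.const_mul c₂).const_add c₁
    have hD1 : deriv (fun θ => c₁ + c₂ * Real.sin (θ - θ₀)) = fun x => c₂ * Real.cos (x - θ₀) :=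
      funext fun x => (hd1 x).deriv
    have hd2 : ∀ x : ℝ, HasDerivAt (fun θ : ℝ => c₂ * Real.cos (θ - θ₀))
        (-(c₂ * Real.sin (x - θ₀))) x := by
      intro x
      have : HasDerivAt (fun θ : ℝ => Real.cos (θ - θ₀)) (-Real.sin (x - θ₀) * 1) x :=
        ((hasDerivAt_id' x).sub_const θ₀).cos
      have := this.const_mul c₂
      exact this.congr_deriv (by ring)
    have hD2 : deriv (fun x : ℝ => c₂ * Real.cos (x - θ₀))
        = fun x => -(c₂ * Real.sin (x - θ₀)) :=
      funext fun x => (hd2 x).deriv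
    have hd3 : ∀ x : ℝ, HasDerivAt (fun θ : ℝ => -(c₂ * Real.sin (θ - θ₀)))
        (-(c₂ * Real.cos (x - θ₀))) x := by
      intro x
      have : HasDerivAt (fun θ : ℝ => c₂ * Real.sin (θ - θ₀)) (c₂ * Real.cos (x - θ₀)) x := by
        have : HasDerivAt (fun θ : ℝ => Real.sin (θ - θ₀)) (Real.cos (x - θ₀) * 1) x :=
          ((hasDerivAt_id' x).sub_const θ₀).sin
        simpa using this.const_mul c₂
      exact this.neg
    have hD3 : deriv (fun x : ℝ => -(c₂ * Real.sin (x - θ₀)))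
        = fun x => -(c₂ * Real.cos (x - θ₀)) :=
      funext fun x => (hd3 x).deriv
    refine ⟨?_, ?_, ?_, ?_⟩
    · intro θ
      simp only
      congr 1
      have : θ + 2 * π - θ₀ = (θ - θ₀) + 2 * π := by ring
      rw [this, Real.sin_add_two_pi]
    · exact contDiff_const.add (contDiff_const.mul
        ((Real.contDiff_sin.of_le le_top).comp (contDiff_id.sub contDiff_const)))
    · intro θ
      have hs1 := Real.neg_one_le_sin (θ - θ₀)
      have hs2 := Real.sin_le_one (θ - θ₀)
      obtain ⟨hl, hr⟩ := abs_lt.mp hc₂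
      simp only
      nlinarith [mul_nonneg (by linarith : (0:ℝ) ≤ c₁ + c₂) (by linarith : (0:ℝ) ≤ 1 + Real.sin (θ - θ₀)),
        mul_nonneg (by linarith : (0:ℝ) ≤ c₁ - c₂) (by linarith : (0:ℝ) ≤ 1 - Real.sin (θ - θ₀))]
    · intro θ
      have hiter3 : iteratedDeriv 3 (fun θ => c₁ + c₂ * Real.sin (θ - θ₀))
          = deriv (deriv (deriv (fun θ => c₁ + c₂ * Real.sin (θ - θ₀)))) := by
        rw [show (3:ℕ) = 2+1 from rfl, iteratedDeriv_succ, show (2:ℕ)=1+1 from rfl,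
          iteratedDeriv_succ, iteratedDeriv_one]
      rw [hiter3, hD1, hD2, hD3]
      simp
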